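/- Let 𝒜 ⊆ M_n(ℝ) be a unital subalgebra and suppose 𝒜 is irreducible (its only invariant subspaces of ℝ^n are {0} and ℝ^n) and contains a matrix of rank 1. Then 𝒜 = M_n(ℝ). -/

import Mathlib

open Matrix

section Aux

private lemma vMV_add_left {n : ℕ} (x x' y : Fin n → ℝ) :
    vecMulVec (x + x') y = vecMulVec x y + vecMulVec x' y := by
  ext i j; simp [vecMulVec_apply, add_mul]

private lemma vMV_smul_left {n : ℕ} (c : ℝ) (x y : Fin n → ℝ) :
    vecMulVec (c • x) y = c • vecMulVec x y := by
  ext i j; simp [vecMulVec_apply, mul_assoc]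

private lemma vMV_add_right {n : ℕ} (x y y' : Fin n → ℝ) :
    vecMulVec x (y + y') = vecMulVec x y + vecMulVec x y' := by
  ext i j; simp [vecMulVec_apply, mul_add]

private lemma vMV_smul_right {n : ℕ} (c : ℝ) (x y : Fin n → ℝ) :
    vecMulVec x (c • y) = c • vecMulVec x y := by
  ext i j; simp [vecMulVec_apply]; ring

private lemma vMV_zero_left {n : ℕ} (y : Fin n → ℝ) : vecMulVec (0 : Fin n → ℝ) y = 0 := by
  ext i j; simp [vecMulVec_apply]

private lemma vMV_zero_right {n : ℕ} (x : Fin n → ℝ) : vecMulVec x (0 : Fin n → ℝ) = 0 := by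
  ext i j; simp [vecMulVec_apply]

private lemma mul_vMV_mul {n : ℕ} (B C : Matrix (Fin n) (Fin n) ℝ) (u v : Fin n → ℝ) :
    B * vecMulVec u v * C = vecMulVec (B *ᵥ u) (v ᵥ* C) := by
  rw [vecMulVec_eq Unit, vecMulVec_eq Unit, replicateCol_mulVec, replicateRow_vecMul,
    Matrix.mul_assoc, Matrix.mul_assoc, Matrix.mul_assoc]

end Aux

/-- Generalized Burnside theorem over ℝ: an irreducible subalgebra of `Mₙ(ℝ)` containing
a matrix of rank one is all of `Mₙ(ℝ)`. -/
theorem stmt11 (n : ℕ) (hn : 0 < n) (𝒜 : Subalgebra ℝ (Matrix (Fin n) (Fin n) ℝ))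
    (hirr : ∀ V : Submodule ℝ (Fin n → ℝ),
      (∀ A ∈ 𝒜, ∀ v ∈ V, A.mulVec v ∈ V) → V = ⊥ ∨ V = ⊤)
    (hrk : ∃ A ∈ 𝒜, Matrix.rank A = 1) :
    𝒜 = ⊤ := by
  classical
  obtain ⟨A, hA, hrank⟩ := hrk
  -- extract a rank-one decomposition A = vecMulVec u v
  have h1 : Module.finrank ℝ (LinearMap.range A.mulVecLin) = 1 := hrank
  obtain ⟨u0, hu0, hgen⟩ := finrank_eq_one_iff'.mp h1
  set u : Fin n → ℝ := (u0 : Fin n → ℝ) with hu_def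
  have hu : u ≠ 0 := fun h => hu0 (by ext i; exact congrFun h i)
  have hcol : ∀ j, ∃ c : ℝ, ∀ i, c * u i = A i j := by
    intro j
    obtain ⟨c, hc⟩ := hgen ⟨A *ᵥ Pi.single j 1, ⟨Pi.single j 1, rfl⟩⟩
    refine ⟨c, fun i => ?_⟩
    have h2 := congrArg (fun w : LinearMap.range A.mulVecLin => (w : Fin n → ℝ) i) hc
    simpa using h2
  choose v hv using hcol
  have hA_eq : A = vecMulVec u v := by
    ext i j
    rw [vecMulVec_apply, ← hv j i, mul_comm]
  have hv0 : v ≠ 0 := by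
    intro h
    rw [hA_eq, h, vMV_zero_right] at hrank
    rw [Matrix.rank_zero] at hrank
    exact one_ne_zero hrank.symm
  -- the orbit of u is everything
  set W : Submodule ℝ (Fin n → ℝ) := Submodule.span ℝ {x | ∃ B ∈ 𝒜, B *ᵥ u = x} with hW
  have hWtop : W = ⊤ := by
    have hinv : ∀ B ∈ 𝒜, ∀ x ∈ W, B *ᵥ x ∈ W := by
      intro B hB x hx
      induction hx using Submodule.span_induction with
      | mem z hz =>
        obtain ⟨C, hC, rfl⟩ := hz
        exact Submodule.subset_span ⟨B * C, 𝒜.mul_mem hB hC, (mulVec_mulVec u B C).symm⟩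
      | zero => rw [mulVec_zero]; exact W.zero_mem
      | add a b _ _ ha hb => rw [mulVec_add]; exact W.add_mem ha hb
      | smul c a _ ha => rw [mulVec_smul]; exact W.smul_mem c ha
    rcases hirr W hinv with h | h
    · exfalso
      have humem : u ∈ W := Submodule.subset_span ⟨1, 𝒜.one_mem, one_mulVec u⟩
      rw [h, Submodule.mem_bot] at humem
      exact hu humem
    · exact h
  -- K = the "orthogonal" of the left orbit of v, is zero
  set K : Submodule ℝ (Fin n → ℝ) :=
    { carrier := {x | ∀ C ∈ 𝒜, v ⬝ᵥ C *ᵥ x = 0}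
      add_mem' := by
        intro a b ha hb C hC
        rw [mulVec_add, dotProduct_add, ha C hC, hb C hC, add_zero]
      zero_mem' := by intro C hC; rw [mulVec_zero, dotProduct_zero]
      smul_mem' := by
        intro c a ha C hC
        rw [mulVec_smul, dotProduct_smul, ha C hC, smul_zero] } with hK
  have hKmem : ∀ x, x ∈ K ↔ ∀ C ∈ 𝒜, v ⬝ᵥ C *ᵥ x = 0 := fun x => Iff.rfl
  have hKbot : K = ⊥ := by
    have hinv : ∀ B ∈ 𝒜, ∀ x ∈ K, B *ᵥ x ∈ K := by
      intro B hB x hx C hC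
      rw [mulVec_mulVec]
      exact hx (C * B) (𝒜.mul_mem hC hB)
    rcases hirr K hinv with h | h
    · exact h
    · exfalso
      have hvK : v ∈ K := by rw [h]; trivial
      have := hvK 1 𝒜.one_mem
      rw [one_mulVec, dotProduct_self_eq_zero] at this
      exact hv0 this
  -- the left orbit of v spans everything
  set U : Submodule ℝ (Fin n → ℝ) := Submodule.span ℝ {y | ∃ C ∈ 𝒜, v ᵥ* C = y} with hU
  have hUtop : U = ⊤ := by
    set e : (Fin n → ℝ) ≃ₗ[ℝ] EuclideanSpace ℝ (Fin n) :=
      (WithLp.linearEquiv 2 ℝ (Fin n → ℝ)).symm with he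
    set U' : Submodule ℝ (EuclideanSpace ℝ (Fin n)) := U.map (e : (Fin n → ℝ) →ₗ[ℝ] _) with hU'
    have horth : U'ᗮ = ⊥ := by
      rw [Submodule.eq_bot_iff]
      intro x hxmem
      have hxK : e.symm x ∈ K := by
        intro C hC
        rw [dotProduct_mulVec]
        have hyU : e (v ᵥ* C) ∈ U' :=
          Submodule.mem_map_of_mem (Submodule.subset_span ⟨C, hC, rfl⟩)
        have h0 := (Submodule.mem_orthogonal U' x).mp hxmem _ hyU
        rw [real_inner_comm] at h0
        have : ∀ y : Fin n → ℝ, (inner ℝ x (e y) : ℝ) = y ⬝ᵥ (e.symm x : Fin n → ℝ) := by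
          intro y
          rw [PiLp.inner_apply]
          simp only [RCLike.inner_apply, conj_trivial]
          apply Finset.sum_congr rfl
          intro i _
          rw [mul_comm]
          exact mul_comm _ _
        rw [this] at h0
        exact h0
      rw [hKbot, Submodule.mem_bot] at hxK
      have : x = e (e.symm x) := (e.apply_symm_apply x).symm
      rw [this, hxK, map_zero]
    have hU'top : U' = ⊤ := Submodule.orthogonal_eq_bot_iff.mp horth
    rw [eq_top_iff]
    intro y _
    have : e y ∈ U' := by rw [hU'top]; trivial
    obtain ⟨z, hz, hez⟩ := this
    have : z = y := e.injective hez
    rwa [this] at hz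
  -- every rank-one matrix is in 𝒜
  have key : ∀ x ∈ W, ∀ y ∈ U, vecMulVec x y ∈ 𝒜 := by
    intro x hx
    induction hx using Submodule.span_induction with
    | mem x hxm =>
      obtain ⟨B, hB, rfl⟩ := hxm
      intro y hy
      induction hy using Submodule.span_induction with
      | mem y hym =>
        obtain ⟨C, hC, rfl⟩ := hym
        rw [← mul_vMV_mul, ← hA_eq]
        exact 𝒜.mul_mem (𝒜.mul_mem hB hA) hC
      | zero => rw [vMV_zero_right]; exact 𝒜.zero_mem
      | add a b _ _ ha hb => rw [vMV_add_right]; exact 𝒜.add_mem ha hb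
      | smul c a _ ha => rw [vMV_smul_right]; exact 𝒜.smul_mem ha c
    | zero => intro y hy; rw [vMV_zero_left]; exact 𝒜.zero_mem
    | add a b _ _ ha hb =>
      intro y hy
      rw [vMV_add_left]; exact 𝒜.add_mem (ha y hy) (hb y hy)
    | smul c a _ ha =>
      intro y hy
      rw [vMV_smul_left]; exact 𝒜.smul_mem (ha y hy) c
  -- conclude
  rw [eq_top_iff]
  intro M _
  rw [matrix_eq_sum_single M]
  refine Subalgebra.sum_mem 𝒜 fun i _ => Subalgebra.sum_mem 𝒜 fun j _ => ?_
  have hstd : single i j (M i j) = M i j • single i j 1 := by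
    rw [smul_single, smul_eq_mul, mul_one]
  rw [hstd, single_eq_single_vecMulVec_single]
  exact 𝒜.smul_mem (key _ (hWtop ▸ Submodule.mem_top) _ (hUtop ▸ Submodule.mem_top)) _
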